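/- For every $\alpha \in [0,1)$, the function $f_\alpha(x,c) := \frac{1-x+c}{1-x^{1-\alpha}+c\,x^{-\alpha}}$ is uniformly bounded on the domain $x \in (0,1)$, $c > 0$: it satisfies $f_\alpha(x,c) \leq f_\alpha(x,0) = \frac{1-x}{1-x^{1-\alpha}}$ for all such $x, c$; the map $x \mapsto f_\alpha(x,0)$ is increasing on $(0,1)$; and $\lim_{x\to 1^-} f_\alpha(x,0) = \frac{1}{1-\alpha}$, so that $f_\alpha(x,c) \leq \frac{1}{1-\alpha}$ on the whole domain. -/
import Mathlib


open Topology

/-- The auxiliary function `f_α(x, c) = (1 - x + c)/(1 - x^{1-α} + c x^{-α})`. -/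
noncomputable def fAlpha (α x c : ℝ) : ℝ :=
  (1 - x + c) / (1 - x ^ ((1 : ℝ) - α) + c * x ^ (-α))

lemma fAlpha_zero_aux (α x : ℝ) :
    fAlpha α x 0 = (1 - x) / (1 - x ^ ((1 : ℝ) - α)) := by
  simp [fAlpha]

lemma fAlpha_den_pos (α : ℝ) (hα1 : α < 1) {x : ℝ} (hx : 0 < x) (hx1 : x < 1) :
    0 < 1 - x ^ ((1 : ℝ) - α) := by
  have : x ^ ((1 : ℝ) - α) < 1 := Real.rpow_lt_one hx.le hx1 (by linarith)
  linarith

lemma fAlpha_le_zero_aux (α : ℝ) (hα0 : 0 ≤ α) (hα1 : α < 1)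
    (x c : ℝ) (hx : 0 < x) (hx1 : x < 1) (hc : 0 < c) :
    fAlpha α x c ≤ fAlpha α x 0 := by
  have hden := fAlpha_den_pos α hα1 hx hx1
  have hxa : (1 : ℝ) ≤ x ^ (-α) := by
    calc (1 : ℝ) = x ^ (0 : ℝ) := (Real.rpow_zero x).symm
    _ ≤ x ^ (-α) := Real.rpow_le_rpow_of_exponent_ge hx hx1.le (by linarith)
  have hxa0 : (0 : ℝ) < x ^ (-α) := by positivity
  have hsplit : x ^ ((1 : ℝ) - α) = x ^ (-α) * x := by
    rw [show (1 : ℝ) - α = -α + 1 by ring, Real.rpow_add hx, Real.rpow_one]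
  have hD : 0 < 1 - x ^ ((1 : ℝ) - α) + c * x ^ (-α) := by positivity
  rw [fAlpha_zero_aux]
  unfold fAlpha
  rw [div_le_div_iff₀ hD hden]
  nlinarith [mul_le_mul_of_nonneg_left hxa hc.le]

lemma fAlpha_mono_aux (α : ℝ) (hα0 : 0 ≤ α) (hα1 : α < 1) :
    MonotoneOn (fun x => fAlpha α x 0) (Set.Ioo (0 : ℝ) 1) := by
  intro x hx y hy hxy
  rcases eq_or_lt_of_le hxy with rfl | hlt
  · exact le_rfl
  simp only [fAlpha_zero_aux]
  have hdx := fAlpha_den_pos α hα1 hx.1 hx.2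
  have hdy := fAlpha_den_pos α hα1 hy.1 hy.2
  rw [div_le_div_iff₀ hdx hdy]
  -- concavity of t ↦ t^(1-α)
  set t : ℝ := (1 - y) / (1 - x) with htdef
  have h1x : (0 : ℝ) < 1 - x := by linarith [hx.2]
  have h1y : (0 : ℝ) < 1 - y := by linarith [hy.2]
  have ht0 : 0 < t := div_pos h1y h1x
  have ht1 : t ≤ 1 := by
    rw [div_le_one h1x]; linarith
  have hconc := (Real.concaveOn_rpow (p := (1 : ℝ) - α) (by linarith) (by linarith)).2
    (Set.mem_Ici.mpr hx.1.le) (Set.mem_Ici.mpr (zero_le_one)) ht0.le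
    (by linarith : (0:ℝ) ≤ 1 - t) (by ring)
  have ht : t * (1 - x) = 1 - y := div_mul_cancel₀ _ (ne_of_gt h1x)
  have hyx : t * x + (1 - t) * 1 = y := by linear_combination -ht
  simp only [smul_eq_mul, Real.one_rpow] at hconc
  rw [hyx] at hconc
  nlinarith [mul_le_mul_of_nonneg_left hconc h1x.le]

lemma fAlpha_tendsto_aux (α : ℝ) (hα0 : 0 ≤ α) (hα1 : α < 1) :
    Filter.Tendsto (fun x => fAlpha α x 0) (𝓝[<] (1 : ℝ)) (𝓝 (1 / (1 - α))) := by
  have hβ : (0 : ℝ) < 1 - α := by linarith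
  have hd : HasDerivAt (fun z : ℝ => z ^ ((1 : ℝ) - α)) (1 - α) 1 := by
    have := Real.hasDerivAt_rpow_const (x := (1 : ℝ)) (p := 1 - α) (Or.inl one_ne_zero)
    simpa using this
  have hslope : Filter.Tendsto (slope (fun z : ℝ => z ^ ((1 : ℝ) - α)) 1)
      (𝓝[≠] (1 : ℝ)) (𝓝 (1 - α)) := hasDerivAt_iff_tendsto_slope.mp hd
  have hle : (𝓝[<] (1 : ℝ)) ≤ (𝓝[≠] (1 : ℝ)) :=
    nhdsWithin_mono 1 (fun z hz => ne_of_lt hz)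
  have h2 : Filter.Tendsto (fun x => 1 / slope (fun z : ℝ => z ^ ((1 : ℝ) - α)) 1 x)
      (𝓝[<] (1 : ℝ)) (𝓝 (1 / (1 - α))) :=
    Filter.Tendsto.div tendsto_const_nhds (hslope.mono_left hle) (ne_of_gt hβ)
  refine h2.congr' ?_
  filter_upwards [Ioo_mem_nhdsLT_of_mem (Set.mem_Ioc.mpr ⟨zero_lt_one, le_rfl⟩)] with x hx
  have hden := fAlpha_den_pos α hα1 hx.1 hx.2
  rw [fAlpha_zero_aux, slope_def_field, Real.one_rpow, one_div_div]
  rw [show (1 : ℝ) - x = -(x - 1) by ring,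
    show (1 : ℝ) - x ^ ((1 : ℝ) - α) = -(x ^ ((1 : ℝ) - α) - 1) by ring, neg_div_neg_eq]

/-- **Uniform boundedness of `f_α`.**
For every `α ∈ [0, 1)`: on the domain `x ∈ (0,1)`, `c > 0` one has
`f_α(x,c) ≤ f_α(x,0) = (1-x)/(1-x^{1-α})`; the map `x ↦ f_α(x,0)` is increasing on
`(0,1)`; `f_α(x,0) → 1/(1-α)` as `x → 1⁻`; and hence `f_α(x,c) ≤ 1/(1-α)` on the
whole domain. -/
theorem fAlpha_bounds (α : ℝ) (hα0 : 0 ≤ α) (hα1 : α < 1) :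
    (∀ x c : ℝ, 0 < x → x < 1 → 0 < c → fAlpha α x c ≤ fAlpha α x 0) ∧
    (∀ x : ℝ, 0 < x → x < 1 →
      fAlpha α x 0 = (1 - x) / (1 - x ^ ((1 : ℝ) - α))) ∧
    (MonotoneOn (fun x => fAlpha α x 0) (Set.Ioo (0 : ℝ) 1)) ∧
    (Filter.Tendsto (fun x => fAlpha α x 0) (𝓝[<] (1 : ℝ)) (𝓝 (1 / (1 - α)))) ∧
    (∀ x c : ℝ, 0 < x → x < 1 → 0 < c → fAlpha α x c ≤ 1 / (1 - α)) := by
  have hβ : (0 : ℝ) < 1 - α := by linarith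
  refine ⟨fAlpha_le_zero_aux α hα0 hα1, fun x _ _ => fAlpha_zero_aux α x,
    fAlpha_mono_aux α hα0 hα1, fAlpha_tendsto_aux α hα0 hα1, ?_⟩
  intro x c hx hx1 hc
  refine (fAlpha_le_zero_aux α hα0 hα1 x c hx hx1 hc).trans ?_
  rw [fAlpha_zero_aux]
  have hden := fAlpha_den_pos α hα1 hx hx1
  rw [div_le_div_iff₀ hden hβ]
  have hber := rpow_one_add_le_one_add_mul_self (s := x - 1) (by linarith)
    (p := 1 - α) (by linarith) (by linarith)
  rw [show (1 : ℝ) + (x - 1) = x by ring] at hber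
  nlinarith
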